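/- A holomorphic function f : SL_2(C) → C with H0 · f = k f for k < 0 and H++ · f = 0 is identically zero. -/

import Mathlib

open Matrix

noncomputable section

attribute [local instance] Matrix.normedAddCommGroup Matrix.normedSpace

/-- SL₂(ℂ) as a subset of the 2×2 complex matrices. -/
def SL2 : Set (Matrix (Fin 2) (Fin 2) ℂ) := {U | U.det = 1}

/-- A function is holomorphic on SL₂(ℂ) iff it is holomorphic on an open neighbourhood of
SL₂(ℂ) in the matrix space (SL₂(ℂ) is a closed Stein submanifold, so this is equivalent to
intrinsic holomorphy). -/
def HolSL2 (f : Matrix (Fin 2) (Fin 2) ℂ → ℂ) : Prop :=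
  ∃ Ω : Set (Matrix (Fin 2) (Fin 2) ℂ), IsOpen Ω ∧ SL2 ⊆ Ω ∧ DifferentiableOn ℂ f Ω

/-- Directional derivative of f along the left-invariant vector field corresponding to
X ∈ sl₂(ℂ), at the point U: (X·f)(U) = df_U(U·X). -/
def lieD (X : Matrix (Fin 2) (Fin 2) ℂ) (f : Matrix (Fin 2) (Fin 2) ℂ → ℂ)
    (U : Matrix (Fin 2) (Fin 2) ℂ) : ℂ := fderiv ℂ f U (U * X)

def H0m : Matrix (Fin 2) (Fin 2) ℂ := !![1, 0; 0, -1]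
def Hppm : Matrix (Fin 2) (Fin 2) ℂ := !![0, 1; 0, 0]
def Hmmm : Matrix (Fin 2) (Fin 2) ℂ := !![0, 0; 1, 0]

namespace S11

abbrev Mat := Matrix (Fin 2) (Fin 2) ℂ

def nup (t : ℂ) : Mat := !![1, t; 0, 1]
def dgm (a : ℂ) : Mat := !![a, 0; 0, a⁻¹]
def wm : Mat := !![0, 1; -1, 0]
def Pm : Mat := !![1, 0; 0, 0]
def Qm : Mat := !![0, 0; 0, 1]

lemma nup_eq (t : ℂ) : nup t = 1 + t • Hppm := by
  ext i j; fin_cases i <;> fin_cases j <;> simp [nup, Hppm, Matrix.one_apply]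

lemma nup_mul_Hppm (t : ℂ) : nup t * Hppm = Hppm := by
  ext i j; fin_cases i <;> fin_cases j <;>
    simp [nup, Hppm, Matrix.mul_apply, Fin.sum_univ_two]

lemma nup_zero : nup 0 = 1 := by
  ext i j; fin_cases i <;> fin_cases j <;> simp [nup, Matrix.one_apply]

lemma nup_mem {M : Mat} (hM : M ∈ SL2) (t : ℂ) : M * nup t ∈ SL2 := by
  have : (nup t).det = 1 := by simp [nup, Matrix.det_fin_two_of]
  simp [SL2, Matrix.det_mul, this, Set.mem_setOf_eq.mp hM]

lemma wm_mem {M : Mat} (hM : M ∈ SL2) : M * wm ∈ SL2 := by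
  have : (wm).det = 1 := by simp [wm, Matrix.det_fin_two_of]
  simp [SL2, Matrix.det_mul, this, Set.mem_setOf_eq.mp hM]

lemma dgm_mem {a : ℂ} (ha : a ≠ 0) {M : Mat} (hM : M ∈ SL2) : M * dgm a ∈ SL2 := by
  have : (dgm a).det = 1 := by simp [dgm, Matrix.det_fin_two_of, mul_inv_cancel₀ ha]
  simp [SL2, Matrix.det_mul, this, Set.mem_setOf_eq.mp hM]

lemma dgm_exp (t : ℂ) : dgm (Complex.exp t) = Complex.exp t • Pm + Complex.exp (-t) • Qm := by
  ext i j; fin_cases i <;> fin_cases j <;> simp [dgm, Pm, Qm, Complex.exp_neg]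

lemma dgm_mul_H0m (a : ℂ) : dgm a * H0m = a • Pm + (-(a⁻¹)) • Qm := by
  ext i j; fin_cases i <;> fin_cases j <;>
    simp [dgm, Pm, Qm, H0m, Matrix.mul_apply, Fin.sum_univ_two]

lemma dgm_one : dgm 1 = 1 := by
  ext i j; fin_cases i <;> fin_cases j <;> simp [dgm, Matrix.one_apply]

lemma ndn_eq (z : ℂ) : (!![1, 0; z, 1] : Mat) = 1 + z • Hmmm := by
  ext i j; fin_cases i <;> fin_cases j <;> simp [Hmmm, Matrix.one_apply]

lemma ndn_mem {M : Mat} (hM : M ∈ SL2) (z : ℂ) : M * !![1, 0; z, 1] ∈ SL2 := by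
  have : (!![1, 0; z, 1] : Mat).det = 1 := by simp [Matrix.det_fin_two_of]
  simp [SL2, Matrix.det_mul, this, Set.mem_setOf_eq.mp hM]

lemma decomp {z : ℂ} (hz : z ≠ 0) :
    (!![1, 0; z, 1] : Mat) = nup z⁻¹ * wm * dgm (-z) * nup z⁻¹ := by
  ext i j; fin_cases i <;> fin_cases j <;>
    simp [nup, wm, dgm, Matrix.mul_apply, Fin.sum_univ_two] <;> field_simp <;> ring

variable {f : Mat → ℂ} {Ω : Set Mat}

lemma lemA (hΩ : IsOpen Ω) (hsub : SL2 ⊆ Ω) (hd : DifferentiableOn ℂ f Ω)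
    (heq : ∀ U ∈ SL2, lieD Hppm f U = 0) {M : Mat} (hM : M ∈ SL2) (t : ℂ) :
    f (M * nup t) = f M := by
  have key : ∀ s : ℂ, HasDerivAt (fun s : ℂ => f (M * nup s)) 0 s := by
    intro s
    have hmem : M * nup s ∈ SL2 := nup_mem hM s
    have hfd : DifferentiableAt ℂ f (M * nup s) :=
      hd.differentiableAt (hΩ.mem_nhds (hsub hmem))
    have hc : HasDerivAt (fun s : ℂ => M * nup s) (M * Hppm) s := by
      have hrep : (fun s : ℂ => M * nup s) = fun s : ℂ => M + s • (M * Hppm) := by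
        funext u; rw [nup_eq, mul_add, mul_one, mul_smul_comm]
      rw [hrep]
      exact (((hasDerivAt_id s).smul_const (M * Hppm)).const_add M).congr_deriv (one_smul _ _)
    have h2 := hfd.hasFDerivAt.comp_hasDerivAt s hc
    have h3 : fderiv ℂ f (M * nup s) (M * Hppm) = 0 := by
      have h4 := heq _ hmem
      rw [lieD] at h4
      rw [show (M : Mat) * Hppm = M * nup s * Hppm by rw [mul_assoc, nup_mul_Hppm]]
      exact h4
    exact h2.congr_deriv h3
  have := is_const_of_deriv_eq_zero (fun s => (key s).differentiableAt)
    (fun s => (key s).deriv) t 0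
  simpa [nup_zero] using this

lemma lemB (hΩ : IsOpen Ω) (hsub : SL2 ⊆ Ω) (hd : DifferentiableOn ℂ f Ω) (k : ℤ)
    (hch : ∀ U ∈ SL2, lieD H0m f U = (k : ℂ) * f U) {M : Mat} (hM : M ∈ SL2) (t : ℂ) :
    f (M * dgm (Complex.exp t)) = Complex.exp ((k : ℂ) * t) * f M := by
  set c : ℂ → Mat := fun u => M * dgm (Complex.exp u) with hc_def
  have hmem : ∀ s : ℂ, c s ∈ SL2 := fun s => dgm_mem (Complex.exp_ne_zero s) hM
  have hcd : ∀ s : ℂ, HasDerivAt c (c s * H0m) s := by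
    intro s
    have hrep : c = fun u : ℂ =>
        Complex.exp u • (M * Pm) + Complex.exp (-u) • (M * Qm) := by
      funext u
      rw [hc_def]; dsimp only
      rw [dgm_exp, mul_add, mul_smul_comm, mul_smul_comm]
    have h1 : HasDerivAt (fun u : ℂ => Complex.exp u • (M * Pm))
        (Complex.exp s • (M * Pm)) s := (Complex.hasDerivAt_exp s).smul_const _
    have h2 : HasDerivAt (fun u : ℂ => Complex.exp (-u) • (M * Qm))
        ((-Complex.exp (-s)) • (M * Qm)) s := by
      have hin : HasDerivAt (fun u : ℂ => Complex.exp (-u)) (-Complex.exp (-s)) s := by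
        exact ((Complex.hasDerivAt_exp (-s)).comp s (hasDerivAt_neg s)).congr_deriv (mul_neg_one _)
      exact hin.smul_const _
    have hsum := h1.add h2
    rw [hrep]
    refine hsum.congr_deriv ?_
    symm
    show (Complex.exp s • (M * Pm) + Complex.exp (-s) • (M * Qm)) * H0m = _
    have hP : Pm * H0m = Pm := by
      ext i j; fin_cases i <;> fin_cases j <;>
        simp [Pm, H0m, Matrix.mul_apply, Fin.sum_univ_two]
    have hQ : Qm * H0m = -Qm := by
      ext i j; fin_cases i <;> fin_cases j <;>
        simp [Qm, H0m, Matrix.mul_apply, Fin.sum_univ_two]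
    rw [add_mul, smul_mul_assoc, smul_mul_assoc, mul_assoc, mul_assoc, hP, hQ,
      mul_neg, smul_neg, ← neg_smul]
  have hg : ∀ s : ℂ, HasDerivAt (fun u : ℂ => f (c u)) ((k : ℂ) * f (c s)) s := by
    intro s
    have hfd : DifferentiableAt ℂ f (c s) :=
      hd.differentiableAt (hΩ.mem_nhds (hsub (hmem s)))
    have h2 := hfd.hasFDerivAt.comp_hasDerivAt s (hcd s)
    have h3 : fderiv ℂ f (c s) (c s * H0m) = (k : ℂ) * f (c s) := hch _ (hmem s)
    exact h2.congr_deriv h3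
  set F : ℂ → ℂ := fun u => Complex.exp (-(k : ℂ) * u) * f (c u) with hF_def
  have hF : ∀ s : ℂ, HasDerivAt F 0 s := by
    intro s
    have he0 := (Complex.hasDerivAt_exp (-(k : ℂ) * s)).comp s
      (HasDerivAt.const_mul (-(k : ℂ)) (hasDerivAt_id s))
    have he : HasDerivAt (fun u : ℂ => Complex.exp (-(k : ℂ) * u))
        (Complex.exp (-(k : ℂ) * s) * (-(k : ℂ) * 1)) s := he0
    have := he.mul (hg s)
    refine this.congr_deriv ?_
    ring
  have hconst := is_const_of_deriv_eq_zero (fun s => (hF s).differentiableAt)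
    (fun s => (hF s).deriv) t 0
  have hF0 : F 0 = f M := by
    simp [hF_def, hc_def, dgm_one]
  rw [hF0, hF_def] at hconst
  have hmul := congrArg (fun x => Complex.exp ((k : ℂ) * t) * x) hconst
  dsimp only at hmul
  rw [← mul_assoc, ← Complex.exp_add] at hmul
  simpa using hmul

lemma lemB' (hΩ : IsOpen Ω) (hsub : SL2 ⊆ Ω) (hd : DifferentiableOn ℂ f Ω) (k : ℤ)
    (hch : ∀ U ∈ SL2, lieD H0m f U = (k : ℂ) * f U) {M : Mat} (hM : M ∈ SL2) {a : ℂ}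
    (ha : a ≠ 0) : f (M * dgm a) = a ^ k * f M := by
  have := lemB hΩ hsub hd k hch hM (Complex.log a)
  rwa [Complex.exp_log ha, Complex.exp_int_mul, Complex.exp_log ha] at this

end S11

open S11 in
/- STATEMENT 11: A holomorphic function f on SL₂(ℂ) with H₀·f = k f for a negative
integer k and H₊₊·f = 0 vanishes identically. -/
theorem stmt_11 (f : Matrix (Fin 2) (Fin 2) ℂ → ℂ) (hf : HolSL2 f) (k : ℤ) (hk : k < 0)
    (hch : ∀ U ∈ SL2, lieD H0m f U = (k : ℂ) * f U)
    (heq : ∀ U ∈ SL2, lieD Hppm f U = 0) :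
    ∀ U ∈ SL2, f U = 0 := by
  obtain ⟨Ω, hΩ, hsub, hd⟩ := hf
  intro U hU
  set g : ℂ → ℂ := fun z => f (U * !![1, 0; z, 1]) with hg_def
  have hcurve : ∀ z : ℂ, U * !![1, 0; z, 1] = U + z • (U * Hmmm) := by
    intro z
    rw [ndn_eq, mul_add, mul_one, mul_smul_comm]
  have hmem : ∀ z : ℂ, U * !![1, 0; z, 1] ∈ SL2 := fun z => ndn_mem hU z
  have hgdiff : Differentiable ℂ g := by
    intro z
    have hfd : DifferentiableAt ℂ f (U * !![1, 0; z, 1]) :=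
      hd.differentiableAt (hΩ.mem_nhds (hsub (hmem z)))
    have hin : DifferentiableAt ℂ (fun z : ℂ => U * !![1, 0; z, 1]) z := by
      have : (fun z : ℂ => U * !![1, 0; z, 1]) = fun z : ℂ => U + z • (U * Hmmm) := by
        funext u; exact hcurve u
      rw [this]
      exact ((differentiableAt_id.smul_const (U * Hmmm)).const_add U)
    exact hfd.comp z hin
  -- key formula
  have hkey : ∀ z : ℂ, z ≠ 0 → g z = (-z) ^ k * f (U * nup z⁻¹ * wm) := by
    intro z hz
    have hM0 : U * nup z⁻¹ * wm ∈ SL2 := wm_mem (nup_mem hU _)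
    have hM1 : U * nup z⁻¹ * wm * dgm (-z) ∈ SL2 := dgm_mem (neg_ne_zero.mpr hz) hM0
    calc g z = f (U * nup z⁻¹ * wm * dgm (-z) * nup z⁻¹) := by
          rw [hg_def]; dsimp only
          rw [decomp hz, ← mul_assoc, ← mul_assoc, ← mul_assoc]
      _ = f (U * nup z⁻¹ * wm * dgm (-z)) := lemA hΩ hsub hd heq hM1 _
      _ = (-z) ^ k * f (U * nup z⁻¹ * wm) :=
          lemB' hΩ hsub hd k hch hM0 (neg_ne_zero.mpr hz)
  -- bound on the compact piece
  have hcont : Continuous (fun c : ℂ => U * nup c * wm) := by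
    have : (fun c : ℂ => U * nup c * wm) = fun c : ℂ => U * wm + c • (U * Hppm * wm) := by
      funext c
      rw [nup_eq, mul_add, mul_one, mul_smul_comm, add_mul, smul_mul_assoc]
    rw [this]
    exact continuous_const.add (continuous_id.smul continuous_const)
  have hK : IsCompact ((fun c : ℂ => U * nup c * wm) '' Metric.closedBall 0 1) :=
    (isCompact_closedBall (0 : ℂ) 1).image hcont
  have hKΩ : ((fun c : ℂ => U * nup c * wm) '' Metric.closedBall 0 1) ⊆ Ω := by
    rintro x ⟨c, -, rfl⟩
    exact hsub (wm_mem (nup_mem hU c))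
  obtain ⟨C, hC⟩ := hK.exists_bound_of_continuousOn (hd.continuousOn.mono hKΩ)
  obtain ⟨C2, hC2⟩ := (isCompact_closedBall (0 : ℂ) 1).exists_bound_of_continuousOn
    hgdiff.continuous.continuousOn
  -- global bound
  have hbound : ∀ z : ℂ, ‖g z‖ ≤ max C C2 := by
    intro z
    by_cases h1 : ‖z‖ ≤ 1
    · refine le_trans (hC2 z ?_) (le_max_right _ _)
      simpa [Metric.mem_closedBall, dist_zero_right] using h1
    · push_neg at h1
      have hz : z ≠ 0 := by
        intro h; rw [h] at h1; simp at h1; linarith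
      have hmemK : U * nup z⁻¹ * wm ∈
          ((fun c : ℂ => U * nup c * wm) '' Metric.closedBall 0 1) := by
        refine ⟨z⁻¹, ?_, rfl⟩
        simp only [Metric.mem_closedBall, dist_zero_right, norm_inv]
        rw [inv_le_one_iff₀]
        right; linarith
      have hfb := hC _ hmemK
      rw [hkey z hz, norm_mul, norm_zpow, norm_neg]
      have hzk : ‖z‖ ^ k ≤ 1 := zpow_le_one_of_nonpos₀ (le_of_lt h1) (le_of_lt hk)
      calc ‖z‖ ^ k * ‖f (U * nup z⁻¹ * wm)‖ ≤ 1 * C :=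
            mul_le_mul hzk hfb (norm_nonneg _) zero_le_one
        _ = C := one_mul C
        _ ≤ max C C2 := le_max_left _ _
  -- Liouville: g is constant
  have hb : Bornology.IsBounded (Set.range g) := by
    rw [isBounded_iff_forall_norm_le]
    exact ⟨max C C2, by rintro x ⟨z, rfl⟩; exact hbound z⟩
  have hgc := hgdiff.apply_eq_apply_of_bounded hb
  have hg0 : g 0 = f U := by
    rw [hg_def]; dsimp only
    rw [show (!![1, 0; (0:ℂ), 1] : Mat) = 1 by rw [ndn_eq]; simp, mul_one]
  have hC0 : 0 ≤ C := le_trans (norm_nonneg _) (hC _ ⟨0, by simp, rfl⟩)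
  -- decay estimate
  have hdecay : ∀ R : ℝ, 1 ≤ R → ‖f U‖ ≤ R⁻¹ * C := by
    intro R hR
    have hRpos : (0 : ℝ) < R := lt_of_lt_of_le zero_lt_one hR
    have hz : ((R : ℂ)) ≠ 0 := by
      simpa using ne_of_gt hRpos
    have hnz : ‖(R : ℂ)‖ = R := by
      rw [Complex.norm_real, Real.norm_eq_abs, abs_of_pos hRpos]
    have hmemK : U * nup ((R : ℂ))⁻¹ * wm ∈
        ((fun c : ℂ => U * nup c * wm) '' Metric.closedBall 0 1) := by
      refine ⟨((R : ℂ))⁻¹, ?_, rfl⟩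
      simp only [Metric.mem_closedBall, dist_zero_right, norm_inv, hnz]
      rw [inv_le_one_iff₀]; right; exact hR
    have hfb := hC _ hmemK
    have h1 : ‖f U‖ = ‖g (R : ℂ)‖ := by rw [← hg0, hgc 0 (R : ℂ)]
    rw [h1, hkey _ hz, norm_mul, norm_zpow, norm_neg, hnz]
    have h2 : R ^ k ≤ R ^ (-1 : ℤ) := zpow_le_zpow_right₀ hR (by omega)
    have h3 : R ^ (-1 : ℤ) = R⁻¹ := by simp
    calc R ^ k * ‖f (U * nup ((R : ℂ))⁻¹ * wm)‖ ≤ R ^ (-1 : ℤ) * C := by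
          apply mul_le_mul h2 hfb (norm_nonneg _)
          positivity
      _ = R⁻¹ * C := by rw [h3]
  -- conclude
  have hzero : ‖f U‖ = 0 := by
    by_contra hne
    have hpos : 0 < ‖f U‖ := lt_of_le_of_ne (norm_nonneg _) (Ne.symm hne)
    set R := max 1 (C / ‖f U‖ + 1) with hR_def
    have hR1 : (1 : ℝ) ≤ R := le_max_left _ _
    have hRpos : (0 : ℝ) < R := lt_of_lt_of_le zero_lt_one hR1
    have h := hdecay R hR1
    have h' : ‖f U‖ * R ≤ C := by
      have := mul_le_mul_of_nonneg_right h (le_of_lt hRpos)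
      rwa [inv_mul_eq_div, div_mul_cancel₀ _ (ne_of_gt hRpos)] at this
    have hRa : C / ‖f U‖ + 1 ≤ R := le_max_right _ _
    have h'' : C < ‖f U‖ * R := by
      have hlt : C / ‖f U‖ < R := lt_of_lt_of_le (lt_add_one _) hRa
      have hceq : ‖f U‖ * (C / ‖f U‖) = C := by
        rw [mul_comm, div_mul_cancel₀ _ (ne_of_gt hpos)]
      calc C = ‖f U‖ * (C / ‖f U‖) := hceq.symm
        _ < ‖f U‖ * R := mul_lt_mul_of_pos_left hlt hpos
    linarith
  exact norm_eq_zero.mp hzero
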